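/- (Proposition 4) Let N > 1 and d > 0 with d² ≤ (16N²/27)·((8N² − 6)·√(1 − 3/(4N²)) + 8N² − 9). Then for every A > 0, the dispersion relation F(z) + A = 0 has exactly two real solutions z with z² ≠ 1: exactly one in the interval I₁ and exactly one in the interval I₂. -/

import Mathlib

/-- `F N d z = (1 - N z)² (1 - d²/(z² - 1))`. -/
noncomputable def F (N d z : ℝ) : ℝ := (1 - N * z) ^ 2 * (1 - d ^ 2 / (z ^ 2 - 1))

/-- The interval `I₁ = (-√(1+d²), -1)`. -/
noncomputable def I₁ (d : ℝ) : Set ℝ := Set.Ioo (-Real.sqrt (1 + d ^ 2)) (-1)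

/-- The interval `I₂ = (1, √(1+d²))`. -/
noncomputable def I₂ (d : ℝ) : Set ℝ := Set.Ioo 1 (Real.sqrt (1 + d ^ 2))

private lemma F_hasDerivAt (N d z : ℝ) (hz : z ^ 2 - 1 ≠ 0) :
    HasDerivAt (F N d)
      (2 * (N * z - 1) * (N * (z ^ 2 - 1) ^ 2 + d ^ 2 * (N - z)) / (z ^ 2 - 1) ^ 2) z := by
  have h1 : HasDerivAt (fun z : ℝ => 1 - N * z) (-(N * 1)) z :=
    ((hasDerivAt_id z).const_mul N).const_sub 1
  have h1p : HasDerivAt (fun z : ℝ => (1 - N * z) ^ 2)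
      (2 * (1 - N * z) ^ 1 * (-(N * 1))) z := h1.pow 2
  have h2 : HasDerivAt (fun z : ℝ => z ^ 2 - 1) (2 * z) z := by
    simpa using (hasDerivAt_pow 2 z).sub_const 1
  have h3 : HasDerivAt (fun z : ℝ => d ^ 2 / (z ^ 2 - 1))
      ((0 * (z ^ 2 - 1) - d ^ 2 * (2 * z)) / (z ^ 2 - 1) ^ 2) z :=
    (hasDerivAt_const z (d ^ 2)).div h2 hz
  have h4 : HasDerivAt (fun z : ℝ => 1 - d ^ 2 / (z ^ 2 - 1))
      (-((0 * (z ^ 2 - 1) - d ^ 2 * (2 * z)) / (z ^ 2 - 1) ^ 2)) z := h3.const_sub 1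
  have h5 := h1p.mul h4
  have h6 : HasDerivAt (F N d) (2 * (1 - N * z) ^ 1 * (-(N * 1)) * (1 - d ^ 2 / (z ^ 2 - 1)) +
      (1 - N * z) ^ 2 * -((0 * (z ^ 2 - 1) - d ^ 2 * (2 * z)) / (z ^ 2 - 1) ^ 2)) z := h5
  convert h6 using 1
  field_simp
  ring

private lemma aux_strictMonoOn {f f' : ℝ → ℝ} {a b c : ℝ}
    (hd : ∀ x ∈ Set.Ioo a b, HasDerivAt f (f' x) x)
    (hpos : ∀ x ∈ Set.Ioo a b, x ≠ c → 0 < f' x) :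
    StrictMonoOn f (Set.Ioo a b) := by
  have key : ∀ s : Set ℝ, Convex ℝ s → s ⊆ Set.Ioo a b → (∀ x ∈ interior s, x ≠ c) →
      StrictMonoOn f s := by
    intro s hs hsub hnc
    apply strictMonoOn_of_deriv_pos hs
    · exact fun x hx => (hd x (hsub hx)).continuousAt.continuousWithinAt
    · intro x hx
      have hx' : x ∈ Set.Ioo a b := hsub (interior_subset hx)
      rw [(hd x hx').deriv]
      exact hpos x hx' (hnc x hx)
  have h1 : StrictMonoOn f (Set.Ioo a b ∩ Set.Iic c) := by
    refine key _ ((convex_Ioo a b).inter (convex_Iic c)) Set.inter_subset_left ?_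
    intro x hx
    rw [interior_inter, interior_Iic] at hx
    exact ne_of_lt hx.2
  have h2 : StrictMonoOn f (Set.Ioo a b ∩ Set.Ici c) := by
    refine key _ ((convex_Ioo a b).inter (convex_Ici c)) Set.inter_subset_left ?_
    intro x hx
    rw [interior_inter, interior_Ici] at hx
    exact ne_of_gt hx.2
  intro x hx y hy hxy
  rcases le_total y c with h | h
  · exact h1 ⟨hx, hxy.le.trans h⟩ ⟨hy, h⟩ hxy
  · rcases le_total c x with h' | h'
    · exact h2 ⟨hx, h'⟩ ⟨hy, h⟩ hxy
    · rcases eq_or_lt_of_le h' with rfl | hxc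
      · exact h2 ⟨hx, Set.self_mem_Ici⟩ ⟨hy, h⟩ hxy
      · rcases eq_or_lt_of_le h with rfl | hcy
        · exact h1 ⟨hx, h'⟩ ⟨hy, Set.self_mem_Iic⟩ hxy
        · have hc : c ∈ Set.Ioo a b := ⟨hx.1.trans hxc, hcy.trans hy.2⟩
          exact lt_trans (h1 ⟨hx, h'⟩ ⟨hc, Set.self_mem_Iic⟩ hxc)
            (h2 ⟨hc, Set.self_mem_Ici⟩ ⟨hy, h⟩ hcy)

set_option maxHeartbeats 4000000 in
/-- Proposition 4: for `N > 1` and `d² ≤ (16N²/27)((8N² - 6)√(1 - 3/(4N²)) + 8N² - 9)`,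
the dispersion relation `F(z) + A = 0` has exactly two real solutions with `z² ≠ 1`:
exactly one in `I₁` and exactly one in `I₂`, for every `A > 0`. -/
theorem stmt_16 (N d A : ℝ) (hN : 1 < N) (hd : 0 < d)
    (hcase : d ^ 2 ≤ (16 * N ^ 2 / 27) *
        ((8 * N ^ 2 - 6) * Real.sqrt (1 - 3 / (4 * N ^ 2)) + 8 * N ^ 2 - 9))
    (hA : 0 < A) :
    {z : ℝ | z ^ 2 ≠ 1 ∧ F N d z + A = 0}.ncard = 2 ∧
    (∃! z, z ∈ I₁ d ∧ F N d z + A = 0) ∧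
    (∃! z, z ∈ I₂ d ∧ F N d z + A = 0) ∧
    (∀ z : ℝ, z ^ 2 ≠ 1 → F N d z + A = 0 → z ∈ I₁ d ∪ I₂ d) := by
  obtain ⟨r, hr_def⟩ : ∃ r, r = Real.sqrt (1 + d ^ 2) := ⟨_, rfl⟩
  obtain ⟨s, hs_def⟩ : ∃ s, s = Real.sqrt (4 * N ^ 2 - 3) := ⟨_, rfl⟩
  have hd2pos : 0 < d ^ 2 := by positivity
  have hr2 : r ^ 2 = 1 + d ^ 2 := by rw [hr_def]; exact Real.sq_sqrt (by positivity)
  have hrnn : 0 ≤ r := hr_def ▸ Real.sqrt_nonneg _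
  have hr1 : 1 < r := by nlinarith
  have hs2 : s ^ 2 = 4 * N ^ 2 - 3 := by rw [hs_def]; exact Real.sq_sqrt (by nlinarith)
  have hsnn : 0 ≤ s := hs_def ▸ Real.sqrt_nonneg _
  have hsN : N < s := by nlinarith
  obtain ⟨t, ht_def⟩ : ∃ t, t = Real.sqrt (1 - 3 / (4 * N ^ 2)) := ⟨_, rfl⟩
  rw [← ht_def] at hcase
  have hN0 : (0:ℝ) < N := by linarith
  have htnn : (0:ℝ) ≤ 1 - 3 / (4 * N ^ 2) := by
    have h4 : (0:ℝ) < 4 * N ^ 2 := by positivity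
    rw [sub_nonneg, div_le_one h4]; nlinarith
  have hts : s = t * (2 * N) := by
    have harg : (4 * N ^ 2 - 3 : ℝ) = (1 - 3 / (4 * N ^ 2)) * (2 * N) ^ 2 := by
      field_simp
      ring
    rw [hs_def, ht_def, harg, Real.sqrt_mul htnn, Real.sqrt_sq (by positivity)]
  have hq : (t * (2 * N)) ^ 2 = 4 * N ^ 2 - 3 := by rw [← hts]; exact hs2
  have hM : d ^ 2 ≤ 16 * N / 27 * (s + 2 * N) ^ 2 * (s - N) := by
    calc d ^ 2 ≤ (16 * N ^ 2 / 27) * ((8 * N ^ 2 - 6) * t + 8 * N ^ 2 - 9) := hcase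
    _ = 16 * N / 27 * (s + 2 * N) ^ 2 * (s - N) := by
        rw [hts]; linear_combination (-(32 * N ^ 2 * t + 48 * N ^ 2) / 27) * hq
  -- key positivity of the derivative numerator factor
  have hkey : ∀ z : ℝ, 1 < z → z ≠ (2 * N + s) / 3 →
      0 < N * (z ^ 2 - 1) ^ 2 + d ^ 2 * (N - z) := by
    intro z hz1 hzc
    rcases le_or_gt z N with h | h
    · have hz2 : 0 < z ^ 2 - 1 := by nlinarith
      have h1 : 0 < N * (z ^ 2 - 1) ^ 2 := mul_pos hN0 (pow_pos hz2 2)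
      nlinarith [mul_nonneg hd2pos.le (sub_nonneg.mpr h)]
    · have hne : 3 * z - 2 * N - s ≠ 0 := by
        intro h0; exact hzc (by linarith)
      have hsq : 0 < (3 * z - 2 * N - s) ^ 2 :=
        lt_of_le_of_ne (sq_nonneg _) (Ne.symm (pow_ne_zero 2 hne))
      have hR : 0 < 3 * z ^ 2 + (4 * N + 2 * s) * z + (8 * N ^ 2 + 4 * N * s - 9) := by
        nlinarith [mul_pos (show (0:ℝ) < 4 * N + 2 * s by nlinarith) (show (0:ℝ) < z by linarith),
          mul_pos hN0 (show (0:ℝ) < s by linarith)]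
      have hident : 27 * (z ^ 2 - 1) ^ 2 - 16 * (s + 2 * N) ^ 2 * (s - N) * (z - N) =
          (3 * z - 2 * N - s) ^ 2 *
            (3 * z ^ 2 + (4 * N + 2 * s) * z + (8 * N ^ 2 + 4 * N * s - 9)) := by
        linear_combination (9 + 12 * N * s + 24 * N ^ 2 - 18 * z * s - 36 * z * N + 9 * z ^ 2) * hs2
      have h2 : 0 < 27 * (z ^ 2 - 1) ^ 2 - 16 * (s + 2 * N) ^ 2 * (s - N) * (z - N) := by
        rw [hident]; exact mul_pos hsq hR
      have h3 : d ^ 2 * (z - N) ≤ 16 * N / 27 * (s + 2 * N) ^ 2 * (s - N) * (z - N) :=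
        mul_le_mul_of_nonneg_right hM (by linarith)
      nlinarith [mul_pos hN0 h2]
  clear hcase hM hq hts htnn ht_def t
  -- monotonicity on I₂
  have hmono2 : StrictMonoOn (F N d) (Set.Ioo 1 r) := by
    apply aux_strictMonoOn
      (f' := fun z => 2 * (N * z - 1) * (N * (z ^ 2 - 1) ^ 2 + d ^ 2 * (N - z)) / (z ^ 2 - 1) ^ 2)
      (c := (2 * N + s) / 3)
    · intro x hx
      have hx2 : 0 < x ^ 2 - 1 := by nlinarith [hx.1]
      exact F_hasDerivAt N d x hx2.ne'
    · intro x hx hxc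
      have hx2 : 0 < x ^ 2 - 1 := by nlinarith [hx.1]
      have h1 : 0 < N * x - 1 := by nlinarith [hx.1]
      have h2 := hkey x hx.1 hxc
      exact div_pos (by nlinarith [mul_pos h1 h2]) (pow_pos hx2 2)
  -- anti-monotonicity on I₁
  have hanti1 : StrictAntiOn (F N d) (Set.Ioo (-r) (-1)) := by
    apply strictAntiOn_of_deriv_neg (convex_Ioo _ _)
    · intro x hx
      have hx2 : 0 < x ^ 2 - 1 := by
        nlinarith [mul_pos (show (0:ℝ) < -(x+1) by exact neg_pos.mpr (by linarith [hx.2]))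
          (show (0:ℝ) < -(x-1) by nlinarith [hx.2])]
      exact ((F_hasDerivAt N d x hx2.ne').continuousAt).continuousWithinAt
    · intro x hx
      rw [interior_Ioo] at hx
      have hx2 : 0 < x ^ 2 - 1 := by
        nlinarith [mul_pos (show (0:ℝ) < -(x+1) by exact neg_pos.mpr (by linarith [hx.2]))
          (show (0:ℝ) < -(x-1) by nlinarith [hx.2])]
      rw [(F_hasDerivAt N d x hx2.ne').deriv]
      apply div_neg_of_neg_of_pos _ (pow_pos hx2 2)
      have h1 : N * x - 1 < 0 := by nlinarith [hx.2]
      have h2 : 0 < N * (x ^ 2 - 1) ^ 2 + d ^ 2 * (N - x) := by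
        nlinarith [mul_pos hN0 (pow_pos hx2 2),
          mul_pos hd2pos (show (0:ℝ) < N - x by nlinarith [hx.2])]
      nlinarith [mul_pos h2 (show (0:ℝ) < 1 - N * x by linarith)]
  clear hkey hs2 hsN hsnn hs_def s
  -- existence points
  have hN1 : (0:ℝ) < (N - 1) ^ 2 := pow_pos (by linarith) 2
  obtain ⟨c1, hc1_def⟩ : ∃ c1 : ℝ, c1 = 1 + A / (N - 1) ^ 2 := ⟨_, rfl⟩
  have hc1_1 : 1 < c1 := by rw [hc1_def]; nlinarith [div_pos hA hN1]
  have hc1A : (N - 1) ^ 2 * c1 = (N - 1) ^ 2 + A := by rw [hc1_def, mul_add, mul_one, mul_div_assoc', mul_div_cancel_left₀ _ hN1.ne']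
  obtain ⟨δ, hδ_def⟩ : ∃ δ : ℝ, δ = d ^ 2 / c1 := ⟨_, rfl⟩
  have hδpos : 0 < δ := hδ_def ▸ div_pos hd2pos (by linarith)
  have hδd : δ < d ^ 2 := by rw [hδ_def]; exact div_lt_self hd2pos hc1_1
  have hdδ : d ^ 2 = δ * c1 := by rw [hδ_def]; field_simp
  obtain ⟨a, ha_def⟩ : ∃ a, a = Real.sqrt (1 + δ / 2) := ⟨_, rfl⟩
  have ha2 : a ^ 2 = 1 + δ / 2 := by rw [ha_def]; exact Real.sq_sqrt (by linarith)
  have hann : 0 ≤ a := ha_def ▸ Real.sqrt_nonneg _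
  have ha1 : 1 < a := by nlinarith
  have har : a < r := by nlinarith
  have hwa : a ^ 2 - 1 = δ / 2 := by linarith
  have hFneg : ∀ e : ℝ, e ^ 2 = a ^ 2 → (N - 1) ^ 2 ≤ (1 - N * e) ^ 2 → F N d e + A < 0 := by
    intro e he hNe
    have hdiv : d ^ 2 / (e ^ 2 - 1) = 2 * c1 := by
      rw [he, hwa, hdδ]
      field_simp [hδpos.ne']
    have hFe : F N d e = (1 - N * e) ^ 2 * (1 - 2 * c1) := by
      simp only [F]; rw [hdiv]
    rw [hFe]
    have h12 : 1 - 2 * c1 < 0 := by linarith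
    nlinarith [mul_le_mul_of_nonpos_right hNe h12.le]
  have hFa1 : F N d a + A < 0 := by
    refine hFneg a rfl ?_
    have h1 : 0 < N * (a - 1) := mul_pos hN0 (by linarith)
    calc (N - 1) ^ 2 ≤ (N * a - 1) ^ 2 := pow_le_pow_left₀ (by linarith) (by nlinarith) 2
    _ = (1 - N * a) ^ 2 := by ring
  have hFa2 : F N d (-a) + A < 0 := by
    refine hFneg (-a) (by ring) ?_
    have h1 : 0 < N * (a - 1) := mul_pos hN0 (by linarith)
    calc (N - 1) ^ 2 ≤ (1 + N * a) ^ 2 := pow_le_pow_left₀ (by linarith) (by linarith) 2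
    _ = (1 - N * (-a)) ^ 2 := by ring
  have hFr : F N d r = 0 := by
    simp only [F]
    rw [show r ^ 2 - 1 = d ^ 2 by linarith, div_self hd2pos.ne']; ring
  have hFr' : F N d (-r) = 0 := by
    simp only [F]
    rw [show (-r) ^ 2 - 1 = d ^ 2 by linear_combination hr2, div_self hd2pos.ne']; ring
  have hcontIcc : ∀ u v : ℝ, (∀ x ∈ Set.Icc u v, x ^ 2 - 1 ≠ 0) →
      ContinuousOn (fun z => F N d z + A) (Set.Icc u v) :=
    fun u v h x hx => (((F_hasDerivAt N d x (h x hx)).add_const A).continuousAt).continuousWithinAt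
  -- root in I₂
  obtain ⟨z₂, hz₂mem, hz₂⟩ : ∃ z ∈ Set.Ioo a r, F N d z + A = 0 := by
    have h0 : (0:ℝ) ∈ Set.Ioo (F N d a + A) (F N d r + A) := ⟨hFa1, by rw [hFr]; linarith⟩
    obtain ⟨z, hz, hz0⟩ := intermediate_value_Ioo har.le
      (hcontIcc a r (fun x hx => by nlinarith [hx.1, hx.2])) h0
    exact ⟨z, hz, hz0⟩
  have hz₂I : z₂ ∈ Set.Ioo 1 r := ⟨lt_trans ha1 hz₂mem.1, hz₂mem.2⟩
  -- root in I₁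
  obtain ⟨z₁, hz₁mem, hz₁⟩ : ∃ z ∈ Set.Ioo (-r) (-a), F N d z + A = 0 := by
    have h0 : (0:ℝ) ∈ Set.Ioo (F N d (-a) + A) (F N d (-r) + A) := ⟨hFa2, by rw [hFr']; linarith⟩
    obtain ⟨z, hz, hz0⟩ := intermediate_value_Ioo' (by linarith : -r ≤ -a)
      (hcontIcc (-r) (-a) (fun x hx => by nlinarith [hx.1, hx.2])) h0
    exact ⟨z, hz, hz0⟩
  have hz₁I : z₁ ∈ Set.Ioo (-r) (-1) := ⟨hz₁mem.1, by linarith [hz₁mem.2]⟩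
  have hI1 : I₁ d = Set.Ioo (-r) (-1) := by rw [I₁, hr_def]
  have hI2 : I₂ d = Set.Ioo 1 r := by rw [I₂, hr_def]
  -- uniqueness
  have huniq2 : ∀ z ∈ I₂ d, F N d z + A = 0 → z = z₂ := by
    intro z hz hzeq
    rw [hI2] at hz
    exact hmono2.injOn hz hz₂I (by linarith)
  have huniq1 : ∀ z ∈ I₁ d, F N d z + A = 0 → z = z₁ := by
    intro z hz hzeq
    rw [hI1] at hz
    exact hanti1.injOn hz hz₁I (by linarith)
  -- all roots lie in I₁ ∪ I₂
  have hsub : ∀ z : ℝ, z ^ 2 ≠ 1 → F N d z + A = 0 → z ∈ I₁ d ∪ I₂ d := by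
    intro z hz1 hzeq
    simp only [F] at hzeq
    have hzz : z ^ 2 - 1 ≠ 0 := sub_ne_zero_of_ne hz1
    have hgt : 1 < z ^ 2 := by
      rcases hzz.lt_or_gt with h | h
      · exfalso
        have hneg : d ^ 2 / (z ^ 2 - 1) < 0 := div_neg_of_pos_of_neg hd2pos h
        nlinarith [mul_nonneg (sq_nonneg (1 - N * z))
          (show (0:ℝ) ≤ 1 - d ^ 2 / (z ^ 2 - 1) by linarith)]
      · linarith
    have hlt : z ^ 2 < 1 + d ^ 2 := by
      by_contra hge
      push_neg at hge
      have h1 : d ^ 2 / (z ^ 2 - 1) ≤ 1 := by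
        rw [div_le_one (by linarith)]; linarith
      nlinarith [mul_nonneg (sq_nonneg (1 - N * z))
        (show (0:ℝ) ≤ 1 - d ^ 2 / (z ^ 2 - 1) by linarith)]
    rw [hI1, hI2]
    rcases lt_trichotomy z 0 with h | h | h
    · left
      exact ⟨by nlinarith, by nlinarith⟩
    · exfalso; nlinarith
    · right
      exact ⟨by nlinarith, by nlinarith⟩
  -- membership of the two roots
  have hz₁mem' : z₁ ∈ I₁ d ∧ F N d z₁ + A = 0 := ⟨by rw [hI1]; exact hz₁I, hz₁⟩
  have hz₂mem' : z₂ ∈ I₂ d ∧ F N d z₂ + A = 0 := ⟨by rw [hI2]; exact hz₂I, hz₂⟩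
  have hSet : {z : ℝ | z ^ 2 ≠ 1 ∧ F N d z + A = 0} = {z₁, z₂} := by
    ext z
    simp only [Set.mem_setOf_eq, Set.mem_insert_iff, Set.mem_singleton_iff]
    constructor
    · rintro ⟨h1, h2⟩
      rcases hsub z h1 h2 with h | h
      · exact Or.inl (huniq1 z h h2)
      · exact Or.inr (huniq2 z h h2)
    · rintro (rfl | rfl)
      · exact ⟨LT.lt.ne' (by nlinarith [hz₁I.2]), hz₁⟩
      · exact ⟨LT.lt.ne' (by nlinarith [hz₂I.1]), hz₂⟩
  refine ⟨?_, ⟨z₁, hz₁mem', fun y hy => huniq1 y hy.1 hy.2⟩,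
    ⟨z₂, hz₂mem', fun y hy => huniq2 y hy.1 hy.2⟩, hsub⟩
  rw [hSet]
  exact Set.ncard_pair (by linarith [hz₁I.2, hz₂I.1] : z₁ ≠ z₂)
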